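/- For n, m ≥ 0, the map sending a pair of isomorphism classes ([M], [N]), where M is a matroid on an n-element set and N is a matroid on an m-element set, to the isomorphism class [M □ N] of their free product (formed after making the ground sets disjoint) is injective from the product of the sets of isomorphism classes of matroids on n and m elements into the set of isomorphism classes of matroids on n + m elements. -/

import Mathlib

open Set Matroid

/-- The rank of a set `X` in a matroid `M`: the maximum cardinality of an
independent subset of `X`.  For `X = M.E` this is the rank of `M`. -/
noncomputable def mrk {α : Type*} (M : Matroid α) (X : Set α) : ℕ :=
  sSup (Set.ncard '' {I | M.Indep I ∧ I ⊆ X})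

/-- Two matroids are isomorphic if there is a bijection between their ground sets
carrying independent sets to independent sets in both directions. -/
def MatroidIso {α β : Type*} (M : Matroid α) (N : Matroid β) : Prop :=
  ∃ e : M.E ≃ N.E, ∀ I : Set M.E,
    M.Indep ((↑) '' I) ↔ N.Indep ((↑) '' (e '' I))

set_option linter.unusedSectionVars false

section mrkAPI
variable {α : Type*} [Finite α] {M : Matroid α} {X Y I : Set α}

lemma mrk_le_of_indep (hI : M.Indep I) (hIX : I ⊆ X) : I.ncard ≤ mrk M X :=
  le_csSup (Set.toFinite _).bddAbove ⟨I, ⟨hI, hIX⟩, rfl⟩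

lemma exists_mrk (M : Matroid α) (X : Set α) :
    ∃ I, M.Indep I ∧ I ⊆ X ∧ I.ncard = mrk M X := by
  have hne : (Set.ncard '' {I | M.Indep I ∧ I ⊆ X}).Nonempty :=
    ⟨0, ∅, ⟨M.empty_indep, empty_subset _⟩, Set.ncard_empty _⟩
  have := hne.csSup_mem (Set.toFinite _)
  obtain ⟨I, ⟨h1, h2⟩, h3⟩ := this
  exact ⟨I, h1, h2, h3⟩

lemma mrk_mono (M : Matroid α) (hXY : X ⊆ Y) : mrk M X ≤ mrk M Y := by
  obtain ⟨I, h1, h2, h3⟩ := exists_mrk M X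
  exact h3 ▸ mrk_le_of_indep h1 (h2.trans hXY)

lemma mrk_indep_eq (hI : M.Indep I) : mrk M I = I.ncard := by
  refine le_antisymm ?_ (mrk_le_of_indep hI Subset.rfl)
  obtain ⟨J, h1, h2, h3⟩ := exists_mrk M I
  exact h3 ▸ Set.ncard_le_ncard h2 (Set.toFinite _)

lemma indep_iff_ncard_le_mrk : M.Indep X ↔ X.ncard ≤ mrk M X := by
  refine ⟨fun h => (mrk_indep_eq h).ge, fun h => ?_⟩
  obtain ⟨J, h1, h2, h3⟩ := exists_mrk M X
  rwa [Set.eq_of_subset_of_ncard_le h2 (h3.symm ▸ h) (Set.toFinite _)] at h1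

end mrkAPI

/-- `L` is the free product of `M` and `N` along the partition `(S, T)`. -/
def IsFP {α : Type*} (L M N : Matroid α) (S T : Set α) : Prop :=
  ∀ A : Set α, L.Indep A ↔ A ⊆ S ∪ T ∧ M.Indep (A ∩ S) ∧
    (A ∩ T).ncard - mrk N (A ∩ T) ≤ mrk M S - mrk M (A ∩ S)

section FP
variable {α : Type*} [Finite α] {L M N : Matroid α} {S T A : Set α} {x y : α}

/-- Key swap lemma: an element of `T` is "freer" than an element of `S`. -/
lemma IsFP.swap_indep (h : IsFP L M N S T) (hST : Disjoint S T)
    (hx : x ∈ S) (hy : y ∈ T) (hxA : x ∉ A) (hyA : y ∉ A)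
    (hInd : L.Indep (insert x A)) : L.Indep (insert y A) := by
  obtain ⟨hsub, hM, hineq⟩ := (h _).1 hInd
  have hxT : x ∉ T := fun hxT => hST.ne_of_mem hx hxT rfl
  have hyS : y ∉ S := fun hyS => hST.ne_of_mem hyS hy rfl
  have hiS : insert x A ∩ S = insert x (A ∩ S) := by
    rw [Set.insert_inter_of_mem hx]
  have hiT : insert x A ∩ T = A ∩ T := by
    rw [Set.insert_inter_of_notMem hxT]
  rw [hiS] at hM hineq
  rw [hiT] at hineq
  have hxAS : x ∉ A ∩ S := fun h' => hxA h'.1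
  have hyAT : y ∉ A ∩ T := fun h' => hyA h'.1
  have hMA : M.Indep (A ∩ S) := hM.subset (Set.subset_insert _ _)
  have h1 : mrk M (insert x (A ∩ S)) = (A ∩ S).ncard + 1 := by
    rw [mrk_indep_eq hM, Set.ncard_insert_of_notMem hxAS (Set.toFinite _)]
  have h2 : mrk M (A ∩ S) = (A ∩ S).ncard := mrk_indep_eq hMA
  have h3 : (A ∩ S).ncard + 1 ≤ mrk M S := by
    rw [← Set.ncard_insert_of_notMem hxAS (Set.toFinite _)]
    exact mrk_le_of_indep hM (Set.insert_subset hx (Set.inter_subset_right))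
  have h4 : mrk N (A ∩ T) ≤ mrk N (insert y (A ∩ T)) :=
    mrk_mono N (Set.subset_insert _ _)
  refine (h _).2 ⟨Set.insert_subset (Or.inr hy) ((Set.subset_insert _ _).trans hsub), ?_, ?_⟩
  · rwa [Set.insert_inter_of_notMem hyS]
  · rw [Set.insert_inter_of_mem hy, Set.insert_inter_of_notMem hyS,
      Set.ncard_insert_of_notMem hyAT (Set.toFinite _), h2]
    rw [h1] at hineq
    omega

/-- Restriction of the free product to `S` is `M`. -/
lemma IsFP.restrict_indep (h : IsFP L M N S T) (hST : Disjoint S T) (hA : A ⊆ S) :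
    L.Indep A ↔ M.Indep A := by
  have h1 : A ∩ S = A := Set.inter_eq_self_of_subset_left hA
  have h2 : A ∩ T = ∅ := by
    rw [Set.eq_empty_iff_forall_notMem]
    exact fun z hz => hST.ne_of_mem (hA hz.1) hz.2 rfl
  rw [h _, h1, h2]
  constructor
  · exact fun h' => h'.2.1
  · exact fun hM => ⟨hA.trans Set.subset_union_left, hM, by simp⟩

/-- Contraction: attaching a maximal independent subset of `S` recovers `N` on `T`. -/
lemma IsFP.contract_indep (h : IsFP L M N S T) (hST : Disjoint S T) {I B : Set α}
    (hI : M.Indep I) (hIS : I ⊆ S) (hImax : I.ncard = mrk M S) (hB : B ⊆ T) :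
    L.Indep (I ∪ B) ↔ N.Indep B := by
  have hBS : B ∩ S = ∅ := by
    rw [Set.eq_empty_iff_forall_notMem]; exact fun z hz => hST.ne_of_mem hz.2 (hB hz.1) rfl
  have hIT : I ∩ T = ∅ := by
    rw [Set.eq_empty_iff_forall_notMem]; exact fun z hz => hST.ne_of_mem (hIS hz.1) hz.2 rfl
  have hS : (I ∪ B) ∩ S = I := by
    rw [Set.union_inter_distrib_right, hBS, Set.union_empty,
      Set.inter_eq_self_of_subset_left hIS]
  have hT : (I ∪ B) ∩ T = B := by
    rw [Set.union_inter_distrib_right, hIT, Set.empty_union,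
      Set.inter_eq_self_of_subset_left hB]
  rw [h _, hS, hT, mrk_indep_eq hI, hImax, Nat.sub_self, Nat.le_zero, Nat.sub_eq_zero_iff_le,
    ← indep_iff_ncard_le_mrk]
  constructor
  · exact fun h' => h'.2.2
  · exact fun hN => ⟨Set.union_subset (hIS.trans Set.subset_union_left)
      (hB.trans Set.subset_union_right), hI, hN⟩

end FP

section Swap
variable {α : Type*} [Finite α] [DecidableEq α]

lemma swap_image_of_iff {x y : α} {A : Set α} (h : x ∈ A ↔ y ∈ A) :
    (Equiv.swap x y) '' A = A := by
  ext a
  rw [Set.mem_image_equiv, Equiv.symm_swap]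
  rcases eq_or_ne a x with rfl | hax
  · simp [Equiv.swap_apply_left, h]
  rcases eq_or_ne a y with rfl | hay
  · simp [Equiv.swap_apply_right, h]
  · rw [Equiv.swap_apply_of_ne_of_ne hax hay]

lemma swap_image_of_mem {x y : α} {A : Set α} (hx : x ∈ A) (hy : y ∉ A) :
    (Equiv.swap x y) '' A = insert y (A \ {x}) := by
  have hxy : x ≠ y := fun h => hy (h ▸ hx)
  ext a
  rw [Set.mem_image_equiv, Equiv.symm_swap]
  rcases eq_or_ne a x with rfl | hax
  · rw [Equiv.swap_apply_left]
    simp [hxy, hy]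
  rcases eq_or_ne a y with rfl | hay
  · rw [Equiv.swap_apply_right]
    simp [hx]
  · rw [Equiv.swap_apply_of_ne_of_ne hax hay]
    simp [hax, hay]

variable {L L' M N P Q : Matroid α} {S T : Set α}

/-- If `L ≅ L'` via `g`, both free products over the partition `(S,T)`,
and `x ∈ S \ g''S`, `y ∈ g''S \ S`, then swapping `x,y` preserves independence in `L'`. -/
lemma swap_iff (h1 : IsFP L M N S T) (h2 : IsFP L' P Q S T)
    (hST : Disjoint S T) (hUT : S ∪ T = Set.univ)
    (g : α ≃ α) (hg : ∀ A : Set α, L.Indep A ↔ L'.Indep (g '' A))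
    {x y : α} (hxS : x ∈ S) (hxg : x ∉ g '' S) (hyg : y ∈ g '' S) (hyS : y ∉ S)
    (A : Set α) (hA : L'.Indep A) : L'.Indep ((Equiv.swap x y) '' A) := by
  have hyT : y ∈ T := by
    have := Set.mem_univ y; rw [← hUT] at this
    exact this.resolve_left hyS
  by_cases hxA : x ∈ A <;> by_cases hyA : y ∈ A
  · rwa [swap_image_of_iff (by tauto)]
  · -- x ∈ A, y ∉ A : use the (S,T) decomposition of L'
    rw [swap_image_of_mem hxA hyA]
    have hxd : x ∉ A \ {x} := by simp
    have hyd : y ∉ A \ {x} := fun h => hyA h.1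
    refine h2.swap_indep hST hxS hyT hxd hyd ?_
    rwa [Set.insert_diff_singleton, Set.insert_eq_self.2 hxA]
  · -- y ∈ A, x ∉ A : use the transported decomposition, i.e. pull back along g
    rw [Equiv.swap_comm, swap_image_of_mem hyA hxA]
    obtain ⟨s, hsS, rfl⟩ := hyg
    have hgx : g.symm x ∈ T := by
      have hx' : g.symm x ∉ S := fun h => hxg ⟨_, h, by simp⟩
      have := Set.mem_univ (g.symm x); rw [← hUT] at this
      exact this.resolve_left hx'
    have hgyS : g.symm (g s) ∈ S := by simpa using hsS
    have hL : L.Indep (g.symm '' A) := by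
      rw [hg]; rwa [Equiv.image_symm_image]
    have hrw : g.symm '' A = insert (g.symm (g s)) (g.symm '' (A \ {g s})) := by
      rw [← Set.image_insert_eq, Set.insert_diff_singleton, Set.insert_eq_self.2 hyA]
    rw [hrw] at hL
    have h1' : g.symm (g s) ∉ g.symm '' (A \ {g s}) := by
      rintro ⟨a, ha, haeq⟩
      have : a = g s := g.symm.injective haeq
      subst this
      exact ha.2 rfl
    have h2' : g.symm x ∉ g.symm '' (A \ {g s}) := by
      rintro ⟨a, ha, haeq⟩
      have : a = x := g.symm.injective haeq
      subst this
      exact hxA ha.1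
    have hL2 : L.Indep (insert (g.symm x) (g.symm '' (A \ {g s}))) :=
      h1.swap_indep hST hgyS hgx h1' h2' hL
    have := (hg _).1 hL2
    rwa [Set.image_insert_eq, Equiv.apply_symm_apply, ← Set.image_comp,
      show (⇑g ∘ ⇑g.symm) = id from funext fun a => g.apply_symm_apply a,
      Set.image_id] at this
  · rwa [swap_image_of_iff (by tauto)]

/-- The isomorphism between two free products along partitions of the same sizes
can be corrected by transpositions until it maps `S` onto `S`. -/
lemma exists_aligned_iso (h1 : IsFP L M N S T) (h2 : IsFP L' P Q S T)
    (hST : Disjoint S T) (hUT : S ∪ T = Set.univ) :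
    ∀ (k : ℕ) (g : α ≃ α), (∀ A : Set α, L.Indep A ↔ L'.Indep (g '' A)) →
      (S \ g '' S).ncard ≤ k →
      ∃ h : α ≃ α, (∀ A : Set α, L.Indep A ↔ L'.Indep (h '' A)) ∧ h '' S = S := by
  intro k
  induction k with
  | zero =>
    intro g hg hk
    refine ⟨g, hg, ?_⟩
    have hd : S \ g '' S = ∅ := by
      rw [← Set.ncard_eq_zero (Set.toFinite _)]; omega
    have hsub : S ⊆ g '' S := Set.diff_eq_empty.1 hd
    exact (Set.eq_of_subset_of_ncard_le hsub
      ((Set.ncard_image_of_injective S g.injective).le) (Set.toFinite _)).symm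
  | succ k ih =>
    intro g hg hk
    by_cases hSS : g '' S = S
    · exact ⟨g, hg, hSS⟩
    have hcard : (g '' S).ncard = S.ncard := Set.ncard_image_of_injective S g.injective
    have hx : ∃ x, x ∈ S \ g '' S := by
      by_contra hc
      push_neg at hc
      have hd : S \ g '' S = ∅ := Set.eq_empty_iff_forall_notMem.2 hc
      have hsub : S ⊆ g '' S := Set.diff_eq_empty.1 hd
      exact hSS (Set.eq_of_subset_of_ncard_le hsub hcard.le (Set.toFinite _)).symm
    have hy : ∃ y, y ∈ g '' S \ S := by
      by_contra hc
      push_neg at hc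
      have hd : g '' S \ S = ∅ := Set.eq_empty_iff_forall_notMem.2 hc
      have hsub : g '' S ⊆ S := Set.diff_eq_empty.1 hd
      exact hSS (Set.eq_of_subset_of_ncard_le hsub hcard.ge (Set.toFinite _))
    obtain ⟨x, hxS, hxg⟩ := hx
    obtain ⟨y, hyg, hyS⟩ := hy
    set τ := Equiv.swap x y with hτ
    have hiff : ∀ A : Set α, L'.Indep A ↔ L'.Indep (τ '' A) := by
      intro A
      refine ⟨swap_iff h1 h2 hST hUT g hg hxS hxg hyg hyS A, fun hA => ?_⟩
      have := swap_iff h1 h2 hST hUT g hg hxS hxg hyg hyS _ hA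
      rwa [← Set.image_comp, show ⇑τ ∘ ⇑τ = id from funext fun a =>
        Equiv.swap_apply_self x y a, Set.image_id] at this
    have hg' : ∀ A : Set α, L.Indep A ↔ L'.Indep ((g.trans τ) '' A) := by
      intro A
      rw [show (g.trans τ) '' A = τ '' (g '' A) from Set.image_comp τ g A]
      exact (hg A).trans (hiff _)
    have himg : (g.trans τ) '' S = insert x (g '' S \ {y}) := by
      rw [show (g.trans τ) '' S = τ '' (g '' S) from Set.image_comp τ g S,
        hτ, Equiv.swap_comm]
      exact swap_image_of_mem hyg hxg
    have hdiff : S \ (g.trans τ) '' S = (S \ g '' S) \ {x} := by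
      rw [himg]
      ext z
      by_cases hzy : z = y
      · subst hzy
        simp [hyS]
      · simp only [Set.mem_diff, Set.mem_insert_iff, Set.mem_singleton_iff]
        tauto
    have hlt : (S \ (g.trans τ) '' S).ncard ≤ k := by
      rw [hdiff]
      have := Set.ncard_diff_singleton_lt_of_mem (show x ∈ S \ g '' S from ⟨hxS, hxg⟩)
        (Set.toFinite _)
      have h2' : ((S \ g '' S) \ {x}).ncard ≤ (S \ g '' S).ncard - 1 := by
        rw [Set.ncard_diff_singleton_of_mem (show x ∈ S \ g '' S from ⟨hxS, hxg⟩)]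
      omega
    exact ih (g.trans τ) hg' hlt

end Swap

lemma iso_to_equiv {α β : Type*} {M : Matroid α} {N : Matroid β}
    (hM : M.E = Set.univ) (hN : N.E = Set.univ) (h : MatroidIso M N) :
    ∃ g : α ≃ β, ∀ A : Set α, M.Indep A ↔ N.Indep (g '' A) := by
  obtain ⟨e, he⟩ := h
  have hMa : ∀ a : α, a ∈ M.E := fun a => hM ▸ Set.mem_univ a
  have hNb : ∀ b : β, b ∈ N.E := fun b => hN ▸ Set.mem_univ b
  refine ⟨⟨fun a => ↑(e ⟨a, hMa a⟩), fun b => ↑(e.symm ⟨b, hNb b⟩), ?_, ?_⟩, ?_⟩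
  · intro a
    simp only [Subtype.coe_eta, Equiv.symm_apply_apply]
  · intro b
    simp only [Subtype.coe_eta, Equiv.apply_symm_apply]
  · intro A
    have h1 : (↑) '' ((↑) ⁻¹' A : Set M.E) = A := by
      rw [Subtype.image_preimage_coe, hM]
      exact Set.univ_inter A
    have h2 := he ((↑) ⁻¹' A)
    rw [h1] at h2
    rw [h2]
    congr! 1
    ext b
    constructor
    · rintro ⟨x, ⟨x', hx', hxx⟩, rfl⟩
      exact ⟨↑x', hx', by rw [← hxx]; simp [Subtype.coe_eta]⟩
    · rintro ⟨a, ha, rfl⟩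
      exact ⟨e ⟨a, hMa a⟩, ⟨⟨a, hMa a⟩, ha, rfl⟩, rfl⟩

lemma matroidIso_of_equiv {α β : Type*} {M : Matroid α} {P : Matroid β}
    (hM : M.E = Set.univ) (hP : P.E = Set.univ) (σ : α ≃ β)
    (hσ : ∀ I : Set α, M.Indep I ↔ P.Indep (σ '' I)) : MatroidIso M P := by
  have hMa : ∀ a : α, a ∈ M.E := fun a => hM ▸ Set.mem_univ a
  have hPb : ∀ b : β, b ∈ P.E := fun b => hP ▸ Set.mem_univ b
  refine ⟨⟨fun x => ⟨σ ↑x, hPb _⟩, fun y => ⟨σ.symm ↑y, hMa _⟩, ?_, ?_⟩, ?_⟩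
  · intro x; ext; simp
  · intro y; ext; simp
  · intro I
    rw [hσ ((↑) '' I)]
    congr! 1
    ext b
    constructor
    · rintro ⟨a, ⟨x, hx, rfl⟩, rfl⟩
      exact ⟨⟨σ ↑x, hPb _⟩, ⟨x, hx, rfl⟩, rfl⟩
    · rintro ⟨y, ⟨x, hx, rfl⟩, rfl⟩
      exact ⟨↑x, ⟨x, hx, rfl⟩, rfl⟩

lemma restrict_equiv_inl {α β : Type*} [Finite α] (h : (α ⊕ β) ≃ (α ⊕ β))
    (hS : h '' (range Sum.inl) = range Sum.inl) :
    ∃ σ : α ≃ α, ∀ x, Sum.inl (σ x) = h (Sum.inl x) := by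
  have hmem : ∀ x : α, ∃ a, Sum.inl a = h (Sum.inl x) := by
    intro x
    have h1 : h (Sum.inl x) ∈ h '' range Sum.inl :=
      Set.mem_image_of_mem _ (Set.mem_range_self x)
    rw [hS] at h1
    obtain ⟨a, ha⟩ := h1
    exact ⟨a, ha⟩
  have hf : ∀ x, Sum.inl ((hmem x).choose) = h (Sum.inl x) := fun x => (hmem x).choose_spec
  have hinj : Function.Injective (fun x => (hmem x).choose) := by
    intro x x' hxx
    have : h (Sum.inl x) = h (Sum.inl x') :=
      ((hf x).symm.trans (congrArg Sum.inl hxx)).trans (hf x')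
    exact Sum.inl_injective (h.injective this)
  exact ⟨Equiv.ofBijective _ ((Finite.injective_iff_bijective).1 hinj), hf⟩

lemma restrict_equiv_inr {α β : Type*} [Finite β] (h : (α ⊕ β) ≃ (α ⊕ β))
    (hS : h '' (range Sum.inr) = range Sum.inr) :
    ∃ ρ : β ≃ β, ∀ x, Sum.inr (ρ x) = h (Sum.inr x) := by
  have hmem : ∀ x : β, ∃ a, Sum.inr a = h (Sum.inr x) := by
    intro x
    have h1 : h (Sum.inr x) ∈ h '' range Sum.inr :=
      Set.mem_image_of_mem _ (Set.mem_range_self x)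
    rw [hS] at h1
    obtain ⟨a, ha⟩ := h1
    exact ⟨a, ha⟩
  have hf : ∀ x, Sum.inr ((hmem x).choose) = h (Sum.inr x) := fun x => (hmem x).choose_spec
  have hinj : Function.Injective (fun x => (hmem x).choose) := by
    intro x x' hxx
    have : h (Sum.inr x) = h (Sum.inr x') :=
      ((hf x).symm.trans (congrArg Sum.inr hxx)).trans (hf x')
    exact Sum.inr_injective (h.injective this)
  exact ⟨Equiv.ofBijective _ ((Finite.injective_iff_bijective).1 hinj), hf⟩

/-- Injectivity of the free-product map on isomorphism classes: for matroids `M`, `P` on an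
`n`-element set and `N`, `Q` on an `m`-element set, if the free products `M □ N` and
`P □ Q` (formed after making the ground sets disjoint, via the inclusions into
`Fin n ⊕ Fin m`) are isomorphic, then `[M] = [P]` and `[N] = [Q]`; that is, the map
`([M], [N]) ↦ [M □ N]` is injective. -/
theorem stmt_15 (n m : ℕ)
    (M P : Matroid (Fin n)) (N Q : Matroid (Fin m))
    (hM : M.E = Set.univ) (hN : N.E = Set.univ)
    (hP : P.E = Set.univ) (hQ : Q.E = Set.univ)
    (L L' : Matroid (Fin n ⊕ Fin m))
    -- `L` is the free product `M □ N` of the disjoint copies of `M` and `N`: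
    (hLE : L.E = Set.range Sum.inl ∪ Set.range Sum.inr)
    (hLI : ∀ A : Set (Fin n ⊕ Fin m), L.Indep A ↔
      A ⊆ Set.range Sum.inl ∪ Set.range Sum.inr ∧
      (M.mapEmbedding (.inl : Fin n ↪ Fin n ⊕ Fin m)).Indep (A ∩ Set.range Sum.inl) ∧
      (A ∩ Set.range Sum.inr).ncard
          - mrk (N.mapEmbedding (.inr : Fin m ↪ Fin n ⊕ Fin m)) (A ∩ Set.range Sum.inr) ≤
        mrk (M.mapEmbedding (.inl : Fin n ↪ Fin n ⊕ Fin m)) (Set.range Sum.inl)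
          - mrk (M.mapEmbedding (.inl : Fin n ↪ Fin n ⊕ Fin m)) (A ∩ Set.range Sum.inl))
    -- `L'` is the free product `P □ Q` of the disjoint copies of `P` and `Q`:
    (hL'E : L'.E = Set.range Sum.inl ∪ Set.range Sum.inr)
    (hL'I : ∀ A : Set (Fin n ⊕ Fin m), L'.Indep A ↔
      A ⊆ Set.range Sum.inl ∪ Set.range Sum.inr ∧
      (P.mapEmbedding (.inl : Fin n ↪ Fin n ⊕ Fin m)).Indep (A ∩ Set.range Sum.inl) ∧
      (A ∩ Set.range Sum.inr).ncard
          - mrk (Q.mapEmbedding (.inr : Fin m ↪ Fin n ⊕ Fin m)) (A ∩ Set.range Sum.inr) ≤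
        mrk (P.mapEmbedding (.inl : Fin n ↪ Fin n ⊕ Fin m)) (Set.range Sum.inl)
          - mrk (P.mapEmbedding (.inl : Fin n ↪ Fin n ⊕ Fin m)) (A ∩ Set.range Sum.inl))
    (hiso : MatroidIso L L') :
    MatroidIso M P ∧ MatroidIso N Q := by
  classical
  set M₁ := M.mapEmbedding (.inl : Fin n ↪ Fin n ⊕ Fin m) with hM₁
  set N₁ := N.mapEmbedding (.inr : Fin m ↪ Fin n ⊕ Fin m) with hN₁
  set P₁ := P.mapEmbedding (.inl : Fin n ↪ Fin n ⊕ Fin m) with hP₁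
  set Q₁ := Q.mapEmbedding (.inr : Fin m ↪ Fin n ⊕ Fin m) with hQ₁
  have hST : Disjoint (Set.range (Sum.inl : Fin n → Fin n ⊕ Fin m)) (Set.range Sum.inr) :=
    Set.isCompl_range_inl_range_inr.disjoint
  have hUT : Set.range (Sum.inl : Fin n → Fin n ⊕ Fin m) ∪ Set.range Sum.inr = Set.univ :=
    Set.range_inl_union_range_inr
  have h1 : IsFP L M₁ N₁ (Set.range Sum.inl) (Set.range Sum.inr) := hLI
  have h2 : IsFP L' P₁ Q₁ (Set.range Sum.inl) (Set.range Sum.inr) := hL'I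
  have hLEu : L.E = Set.univ := by rw [hLE]; exact hUT
  have hL'Eu : L'.E = Set.univ := by rw [hL'E]; exact hUT
  obtain ⟨g₀, hg₀⟩ := iso_to_equiv hLEu hL'Eu hiso
  obtain ⟨h, hg, hhS⟩ := exists_aligned_iso h1 h2 hST hUT
    ((Set.range Sum.inl \ g₀ '' Set.range Sum.inl).ncard) g₀ hg₀ le_rfl
  have hhT : h '' (Set.range Sum.inr) = Set.range Sum.inr := by
    rw [← Set.compl_range_inl, Set.image_compl_eq h.bijective, hhS]
  obtain ⟨σ, hσ⟩ := restrict_equiv_inl h hhS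
  obtain ⟨ρ, hρ⟩ := restrict_equiv_inr h hhT
  have himgS : ∀ I : Set (Fin n), h '' (Sum.inl '' I) = Sum.inl '' (σ '' I) := by
    intro I; ext b
    constructor
    · rintro ⟨_, ⟨x, hx, rfl⟩, rfl⟩
      exact ⟨σ x, ⟨x, hx, rfl⟩, hσ x⟩
    · rintro ⟨_, ⟨x, hx, rfl⟩, rfl⟩
      exact ⟨Sum.inl x, ⟨x, hx, rfl⟩, (hσ x).symm⟩
  have himgT : ∀ B : Set (Fin m), h '' (Sum.inr '' B) = Sum.inr '' (ρ '' B) := by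
    intro B; ext b
    constructor
    · rintro ⟨_, ⟨x, hx, rfl⟩, rfl⟩
      exact ⟨ρ x, ⟨x, hx, rfl⟩, hρ x⟩
    · rintro ⟨_, ⟨x, hx, rfl⟩, rfl⟩
      exact ⟨Sum.inr x, ⟨x, hx, rfl⟩, (hρ x).symm⟩
  have hcoeinl : ⇑(Function.Embedding.inl : Fin n ↪ Fin n ⊕ Fin m) = Sum.inl := rfl
  have hcoeinr : ⇑(Function.Embedding.inr : Fin m ↪ Fin n ⊕ Fin m) = Sum.inr := rfl
  have hMemb : ∀ (R : Matroid (Fin n)) (I : Set (Fin n)),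
      (R.mapEmbedding (.inl : Fin n ↪ Fin n ⊕ Fin m)).Indep (Sum.inl '' I) ↔ R.Indep I := by
    intro R I
    rw [Matroid.mapEmbedding_indep_iff, hcoeinl,
      Set.preimage_image_eq I Sum.inl_injective]
    simp [Set.image_subset_range]
  have hNemb : ∀ (R : Matroid (Fin m)) (B : Set (Fin m)),
      (R.mapEmbedding (.inr : Fin m ↪ Fin n ⊕ Fin m)).Indep (Sum.inr '' B) ↔ R.Indep B := by
    intro R B
    rw [Matroid.mapEmbedding_indep_iff, hcoeinr,
      Set.preimage_image_eq B Sum.inr_injective]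
    simp [Set.image_subset_range]
  -- M ≅ P
  have hMP : ∀ I : Set (Fin n), M.Indep I ↔ P.Indep (σ '' I) := by
    intro I
    rw [← hMemb M I, ← hM₁, ← h1.restrict_indep hST (Set.image_subset_range _ _),
      hg, himgS, h2.restrict_indep hST (Set.image_subset_range _ _), hP₁, hMemb P (σ '' I)]
  refine ⟨matroidIso_of_equiv hM hP σ hMP, ?_⟩
  -- N ≅ Q
  obtain ⟨I, hIi, hIS, hIcard⟩ := exists_mrk M₁ (Set.range Sum.inl)
  have hLIi : L.Indep I := (h1.restrict_indep hST hIS).2 hIi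
  have hL'Ii : L'.Indep (h '' I) := (hg I).1 hLIi
  have hhIS : h '' I ⊆ Set.range Sum.inl := by
    rw [← hhS]; exact Set.image_mono hIS
  have hPIi : P₁.Indep (h '' I) := (h2.restrict_indep hST hhIS).1 hL'Ii
  have hsymmS : h.symm '' (Set.range Sum.inl) = Set.range Sum.inl := by
    conv_lhs => rw [← hhS]
    rw [Equiv.symm_image_image]
  have hIcard' : (h '' I).ncard = mrk P₁ (Set.range Sum.inl) := by
    refine le_antisymm (mrk_le_of_indep hPIi hhIS) ?_
    obtain ⟨J, hJi, hJS, hJcard⟩ := exists_mrk P₁ (Set.range Sum.inl)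
    have hJL' : L'.Indep J := (h2.restrict_indep hST hJS).2 hJi
    have hJL : L.Indep (h.symm '' J) := by
      rw [hg]; rwa [Equiv.image_symm_image]
    have hJsub : h.symm '' J ⊆ Set.range Sum.inl := by
      rw [← hsymmS]; exact Set.image_mono hJS
    have hle := mrk_le_of_indep ((h1.restrict_indep hST hJsub).1 hJL) hJsub
    rw [Set.ncard_image_of_injective _ h.symm.injective] at hle
    rw [Set.ncard_image_of_injective _ h.injective, hIcard]
    omega
  have hNQ : ∀ B : Set (Fin m), N.Indep B ↔ Q.Indep (ρ '' B) := by
    intro B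
    rw [← hNemb N B, ← hN₁,
      ← h1.contract_indep hST hIi hIS hIcard (Set.image_subset_range _ _),
      hg, Set.image_union, himgT,
      h2.contract_indep hST hPIi hhIS hIcard' (Set.image_subset_range _ _),
      hQ₁, hNemb Q (ρ '' B)]
  exact matroidIso_of_equiv hN hQ ρ hNQ
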